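/- For every measurable f : (0,∞) → [0,∞) with ‖f‖ < ∞ and every integer n ≥ 1, one has ‖S₁ⁿ S₂ f‖ ≤ Ω⁺(b,a)·( ‖S₁^{n−1} S₂ f‖ + ‖S₁ⁿ f‖ ), where S₁⁰ denotes the identity operator and S₁ⁿ the n-th iterate of S₁. -/

import Mathlib

open MeasureTheory Set Filter
open scoped ENNReal

/-- `B(x) = ∫₀ˣ (b/a)(y) dy`. -/
noncomputable def Bfun (a b : ℝ → ℝ) (x : ℝ) : ℝ := ∫ y in (0:ℝ)..x, b y / a y

/-- `‖f‖ = ∫₀^∞ f(x) e^{2B(x)} dx` for nonnegative (extended-real-valued) `f`. -/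
noncomputable def wNorm (a b : ℝ → ℝ) (f : ℝ → ℝ≥0∞) : ℝ≥0∞ :=
  ∫⁻ x in Ioi (0:ℝ), f x * ENNReal.ofReal (Real.exp (2 * Bfun a b x))

/-- `S₁f(x) = (∫₀ˣ (1/a) e^{-2B} dz)(∫ₓ^∞ f e^{2B} dz)`. -/
noncomputable def S1 (a b : ℝ → ℝ) (f : ℝ → ℝ≥0∞) : ℝ → ℝ≥0∞ := fun x =>
  ENNReal.ofReal (∫ z in (0:ℝ)..x, (a z)⁻¹ * Real.exp (-2 * Bfun a b z)) *
    ∫⁻ z in Ioi x, f z * ENNReal.ofReal (Real.exp (2 * Bfun a b z))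

/-- `S₂f(x) = ∫₀ˣ f(z) e^{2B(z)} (∫₀^z (1/a) e^{-2B} dt) dz`. -/
noncomputable def S2 (a b : ℝ → ℝ) (f : ℝ → ℝ≥0∞) : ℝ → ℝ≥0∞ := fun x =>
  ∫⁻ z in Ioo (0:ℝ) x,
    f z * ENNReal.ofReal (Real.exp (2 * Bfun a b z) *
      ∫ t in (0:ℝ)..z, (a t)⁻¹ * Real.exp (-2 * Bfun a b t))

/-- `Ω⁺(b,a) = sup_{x>0} (∫₀ˣ (1/a) e^{-2B}) (∫ₓ^∞ e^{2B}) ∈ [0,∞]`. -/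
noncomputable def OmegaPlus (a b : ℝ → ℝ) : ℝ≥0∞ :=
  ⨆ x ∈ Ioi (0:ℝ),
    ENNReal.ofReal (∫ y in (0:ℝ)..x, (a y)⁻¹ * Real.exp (-2 * Bfun a b y)) *
      ∫⁻ y in Ioi x, ENNReal.ofReal (Real.exp (2 * Bfun a b y))

namespace Stmt17Aux

noncomputable def Ef (a b : ℝ → ℝ) (z : ℝ) : ℝ≥0∞ :=
  ENNReal.ofReal (Real.exp (2 * Bfun a b z))
noncomputable def Wf (a b : ℝ → ℝ) (x : ℝ) : ℝ :=
  ∫ z in (0:ℝ)..x, (a z)⁻¹ * Real.exp (-2 * Bfun a b z)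
noncomputable def tl (a b : ℝ → ℝ) (g : ℝ → ℝ≥0∞) (x : ℝ) : ℝ≥0∞ :=
  ∫⁻ z in Ioi x, g z * Ef a b z
noncomputable def Ff (a b : ℝ → ℝ) (f : ℝ → ℝ≥0∞) (t : ℝ) : ℝ≥0∞ :=
  f t * ENNReal.ofReal (Real.exp (2 * Bfun a b t) * Wf a b t)
noncomputable def Eft (a b : ℝ → ℝ) (z : ℝ) : ℝ≥0∞ := Ef a b (max z 0)
noncomputable def Wft (a b : ℝ → ℝ) (x : ℝ) : ℝ := Wf a b (max x 0)
noncomputable def Rt (a b : ℝ → ℝ) (x : ℝ) : ℝ≥0∞ := ∫⁻ z in Ioi x, Eft a b z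

lemma cont_primitive {g : ℝ → ℝ} (hg : ContinuousOn g (Ici 0)) :
    ContinuousOn (fun x => ∫ t in (0:ℝ)..x, g t) (Ici 0) := by
  intro x hx
  have hx0 : (0:ℝ) ≤ x := hx
  have huicc : uIcc (0:ℝ) (x+1) = Icc 0 (x+1) := uIcc_of_le (by linarith)
  have hi : IntegrableOn g (uIcc (0:ℝ) (x+1)) volume := by
    rw [huicc]
    exact (hg.mono Icc_subset_Ici_self).integrableOn_compact isCompact_Icc
  have h := intervalIntegral.continuousOn_primitive_interval hi
  have hx' : x ∈ uIcc (0:ℝ) (x+1) := by rw [huicc]; exact ⟨hx0, by linarith⟩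
  refine (h x hx').mono_of_mem_nhdsWithin ?_
  rw [huicc, ← Ici_inter_Iic]
  exact inter_mem_nhdsWithin _ (Iic_mem_nhds (by linarith))

variable {a b : ℝ → ℝ}

lemma contB (ha : ContinuousOn a (Ici 0)) (hapos : ∀ x ∈ Ici (0:ℝ), 0 < a x)
    (hb : ContinuousOn b (Ici 0)) : ContinuousOn (Bfun a b) (Ici 0) :=
  cont_primitive (hb.div ha fun x hx => (hapos x hx).ne')

lemma contW (ha : ContinuousOn a (Ici 0)) (hapos : ∀ x ∈ Ici (0:ℝ), 0 < a x)
    (hB : ContinuousOn (Bfun a b) (Ici 0)) : ContinuousOn (Wf a b) (Ici 0) := by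
  refine cont_primitive ?_
  exact (ha.inv₀ fun x hx => (hapos x hx).ne').mul
    (Real.continuous_exp.comp_continuousOn (continuousOn_const.mul hB))

lemma contBt (hB : ContinuousOn (Bfun a b) (Ici 0)) :
    Continuous fun z : ℝ => Bfun a b (max z 0) :=
  hB.comp_continuous (continuous_id.max continuous_const) fun z => le_max_right z 0

lemma measurable_Eft (hB : ContinuousOn (Bfun a b) (Ici 0)) : Measurable (Eft a b) :=
  ((Real.continuous_exp.comp (continuous_const.mul (contBt hB))).measurable).ennreal_ofReal

lemma measurable_ofReal_Wft (hW : ContinuousOn (Wf a b) (Ici 0)) :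
    Measurable fun x => ENNReal.ofReal (Wft a b x) :=
  ((hW.comp_continuous ((continuous_id.max continuous_const))
    fun z => le_max_right z 0).measurable).ennreal_ofReal

lemma antitone_tl (g : ℝ → ℝ≥0∞) : Antitone (tl a b g) := fun _ _ hxy =>
  lintegral_mono' (Measure.restrict_mono (Ioi_subset_Ioi hxy) le_rfl) le_rfl

lemma measurable_tl (g : ℝ → ℝ≥0∞) : Measurable (tl a b g) := (antitone_tl g).measurable

lemma Eft_eq {z : ℝ} (hz : 0 ≤ z) : Eft a b z = Ef a b z := by
  unfold Eft; rw [max_eq_left hz]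

lemma Wft_eq {x : ℝ} (hx : 0 ≤ x) : Wft a b x = Wf a b x := by
  unfold Wft; rw [max_eq_left hx]

lemma Rt_eq {x : ℝ} (hx : 0 ≤ x) : Rt a b x = ∫⁻ z in Ioi x, Ef a b z := by
  refine setLIntegral_congr_fun measurableSet_Ioi (fun z hz => ?_)
  exact Eft_eq (le_trans hx (le_of_lt hz))

lemma S1_apply (g : ℝ → ℝ≥0∞) (x : ℝ) :
    S1 a b g x = ENNReal.ofReal (Wf a b x) * tl a b g x := rfl
lemma wNorm_eq (g : ℝ → ℝ≥0∞) : wNorm a b g = ∫⁻ x in Ioi (0:ℝ), g x * Ef a b x := rfl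
lemma S2_apply (f : ℝ → ℝ≥0∞) (x : ℝ) :
    S2 a b f x = ∫⁻ z in Ioo (0:ℝ) x, Ff a b f z := rfl

lemma WR_le {t : ℝ} (ht : t ∈ Ioi (0:ℝ)) :
    ENNReal.ofReal (Wf a b t) * (∫⁻ z in Ioi t, Ef a b z) ≤ OmegaPlus a b :=
  le_iSup₂ (f := fun x (_ : x ∈ Ioi (0:ℝ)) =>
    ENNReal.ofReal (Wf a b x) * ∫⁻ z in Ioi x, Ef a b z) t ht

lemma Eft_ne_top (z : ℝ) : Eft a b z ≠ ⊤ := ENNReal.ofReal_ne_top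

lemma aemeas_S1_mul (hB : ContinuousOn (Bfun a b) (Ici 0))
    (hW : ContinuousOn (Wf a b) (Ici 0)) (g : ℝ → ℝ≥0∞) {s : Set ℝ}
    (hs : MeasurableSet s) (h0 : s ⊆ Ioi 0) :
    AEMeasurable (fun z => S1 a b g z * Ef a b z) (volume.restrict s) := by
  have hm : Measurable fun z => ENNReal.ofReal (Wft a b z) * tl a b g z * Eft a b z :=
    ((measurable_ofReal_Wft hW).mul (measurable_tl g)).mul (measurable_Eft hB)
  refine hm.aemeasurable.congr ?_
  filter_upwards [ae_restrict_mem hs] with z hz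
  have hz0 : (0:ℝ) ≤ z := (Set.mem_Ioi.mp (h0 hz)).le
  rw [Wft_eq hz0, Eft_eq hz0, S1_apply]

lemma key (hB : ContinuousOn (Bfun a b) (Ici 0)) (hW : ContinuousOn (Wf a b) (Ici 0))
    {f : ℝ → ℝ≥0∞} (hf : Measurable f) {x : ℝ} (hx : x ∈ Ioi (0:ℝ)) :
    S1 a b (S2 a b f) x ≤ OmegaPlus a b * (S2 a b f x + S1 a b f x) := by
  have hx0 : (0:ℝ) < x := hx
  set c := OmegaPlus a b with hc
  have mEft : Measurable (Eft a b) := measurable_Eft hB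
  set Fft : ℝ → ℝ≥0∞ := fun t => f t * (Eft a b t * ENNReal.ofReal (Wft a b t)) with hFt
  have mFft : Measurable Fft := hf.mul (mEft.mul (measurable_ofReal_Wft hW))
  have hFf : ∀ t : ℝ, 0 ≤ t → Ff a b f t = Fft t := by
    intro t ht
    have h0 : Ff a b f t = f t * (Ef a b t * ENNReal.ofReal (Wf a b t)) := by
      unfold Ff Ef
      rw [ENNReal.ofReal_mul (Real.exp_pos _).le]
    rw [h0, hFt]
    simp only []
    rw [Eft_eq ht, Wft_eq ht]
  set T : ℝ → ℝ≥0∞ := fun z => ∫⁻ t in Ico x z, Fft t with hTdef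
  -- Step 1
  have hstep1 : tl a b (S2 a b f) x
      = ∫⁻ z in Ioi x, (S2 a b f x + T z) * Eft a b z := by
    refine setLIntegral_congr_fun measurableSet_Ioi (fun z hz => ?_)
    have hz0 : (0:ℝ) < z := hx0.trans hz
    have hdisj : Disjoint (Ioo (0:ℝ) x) (Ico x z) :=
      Set.disjoint_left.2 fun t h1 h2 => absurd h2.1 (not_le.2 h1.2)
    have hsum : S2 a b f z = S2 a b f x + T z := by
      rw [S2_apply, S2_apply, ← Ioo_union_Ico_eq_Ioo hx0 (le_of_lt hz),
        lintegral_union measurableSet_Ico hdisj]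
      congr 1
      refine setLIntegral_congr_fun measurableSet_Ico (fun t ht => ?_)
      exact hFf t (le_trans hx0.le ht.1)
    rw [hsum, Eft_eq hz0.le]
  -- Step 2
  have hstep2 : ∫⁻ z in Ioi x, (S2 a b f x + T z) * Eft a b z
      = S2 a b f x * Rt a b x + ∫⁻ z in Ioi x, T z * Eft a b z := by
    have h1 : ∀ z, (S2 a b f x + T z) * Eft a b z
        = S2 a b f x * Eft a b z + T z * Eft a b z := fun z => add_mul _ _ _
    simp_rw [h1]
    rw [lintegral_add_left (mEft.const_mul _), lintegral_const_mul _ mEft]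
    rfl
  -- Step 3 : Fubini
  set k : ℝ → ℝ → ℝ≥0∞ := fun z t => (Ico x z).indicator Fft t * Eft a b z with hk
  have hTk : ∀ z, T z * Eft a b z = ∫⁻ t, k z t := by
    intro z
    rw [hTdef]
    simp only []
    rw [← lintegral_indicator measurableSet_Ico,
      ← lintegral_mul_const' _ _ (Eft_ne_top (a := a) (b := b) z)]
  have hS : MeasurableSet {q : ℝ × ℝ | x ≤ q.2 ∧ q.2 < q.1} := by
    have : {q : ℝ × ℝ | x ≤ q.2 ∧ q.2 < q.1}
        = {q : ℝ × ℝ | x ≤ q.2} ∩ {q : ℝ × ℝ | q.2 < q.1} := rfl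
    rw [this]
    exact (measurableSet_le measurable_const measurable_snd).inter
      (measurableSet_lt measurable_snd measurable_fst)
  have hmk : AEMeasurable (Function.uncurry k)
      ((volume.restrict (Ioi x)).prod volume) := by
    have heq : Function.uncurry k = fun p : ℝ × ℝ =>
        ({q : ℝ × ℝ | x ≤ q.2 ∧ q.2 < q.1}.indicator (fun q => Fft q.2) p) * Eft a b p.1 := by
      funext p
      by_cases h : x ≤ p.2 ∧ p.2 < p.1 <;>
        simp [Function.uncurry, hk, Set.indicator_apply, Set.mem_Ico, Set.mem_setOf_eq, h]
    rw [heq]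
    exact (((mFft.comp measurable_snd).indicator hS).mul (mEft.comp measurable_fst)).aemeasurable
  have hinner : ∀ t, (∫⁻ z in Ioi x, k z t)
      = (Ici x).indicator (fun t => Fft t * Rt a b t) t := by
    intro t
    by_cases ht : x ≤ t
    · have heq : ∀ z, k z t = (Ioi t).indicator (fun z => Fft t * Eft a b z) z := by
        intro z
        by_cases hz : t < z
        · rw [hk]
          simp only []
          rw [Set.indicator_of_mem (Set.mem_Ico.mpr ⟨ht, hz⟩),
            Set.indicator_of_mem (Set.mem_Ioi.mpr hz)]
        · have h1 : t ∉ Ico x z := fun h => hz h.2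
          have h2 : z ∉ Ioi t := by simpa using hz
          rw [hk]
          simp only []
          rw [Set.indicator_of_notMem h1, Set.indicator_of_notMem h2, zero_mul]
      simp_rw [heq]
      rw [lintegral_indicator measurableSet_Ioi, Measure.restrict_restrict measurableSet_Ioi,
        Set.Ioi_inter_Ioi, max_eq_left ht, lintegral_const_mul _ mEft,
        Set.indicator_of_mem (Set.mem_Ici.mpr ht)]
      rfl
    · have heq : ∀ z, k z t = 0 := by
        intro z
        have h1 : t ∉ Ico x z := fun h => ht h.1
        rw [hk]
        simp only []
        rw [Set.indicator_of_notMem h1, zero_mul]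
      simp_rw [heq]
      rw [Set.indicator_of_notMem (fun h => ht (Set.mem_Ici.mp h))]
      simp
  have hstep3 : ∫⁻ z in Ioi x, T z * Eft a b z = ∫⁻ t in Ici x, Fft t * Rt a b t := by
    calc ∫⁻ z in Ioi x, T z * Eft a b z = ∫⁻ z in Ioi x, ∫⁻ t, k z t := by
          exact lintegral_congr fun z => hTk z
      _ = ∫⁻ t, ∫⁻ z in Ioi x, k z t := lintegral_lintegral_swap hmk
      _ = ∫⁻ t, (Ici x).indicator (fun t => Fft t * Rt a b t) t :=
          lintegral_congr hinner
      _ = ∫⁻ t in Ici x, Fft t * Rt a b t := lintegral_indicator measurableSet_Ici _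
  -- Step 4 : bound
  have hstep4 : ∫⁻ t in Ici x, Fft t * Rt a b t ≤ c * tl a b f x := by
    have hb1 : ∫⁻ t in Ici x, Fft t * Rt a b t ≤ ∫⁻ t in Ici x, c * (f t * Eft a b t) := by
      refine lintegral_mono_ae ((ae_restrict_iff' measurableSet_Ici).2 (ae_of_all _
        fun t ht => ?_))
      have ht0 : (0:ℝ) < t := lt_of_lt_of_le hx0 ht
      have h1 : ENNReal.ofReal (Wft a b t) * Rt a b t ≤ c := by
        rw [Wft_eq ht0.le, Rt_eq ht0.le]
        exact WR_le ht0
      calc Fft t * Rt a b t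
          = (f t * Eft a b t) * (ENNReal.ofReal (Wft a b t) * Rt a b t) := by
            rw [hFt]; ring
        _ ≤ (f t * Eft a b t) * c := mul_le_mul_right h1 _
        _ = c * (f t * Eft a b t) := mul_comm _ _
    refine le_trans hb1 ?_
    rw [lintegral_const_mul (f := fun t => f t * Eft a b t) _ (hf.mul mEft)]
    refine mul_le_mul_right (le_of_eq ?_) _
    rw [← restrict_Ioi_eq_restrict_Ici]
    refine setLIntegral_congr_fun measurableSet_Ioi (fun t ht => ?_)
    rw [Eft_eq (le_of_lt (hx0.trans ht))]
  -- assemble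
  have hRx : ENNReal.ofReal (Wf a b x) * Rt a b x ≤ c := by
    rw [Rt_eq hx0.le]; exact WR_le hx
  calc S1 a b (S2 a b f) x
      = ENNReal.ofReal (Wf a b x) *
        (S2 a b f x * Rt a b x + ∫⁻ z in Ioi x, T z * Eft a b z) := by
        rw [S1_apply, hstep1, hstep2]
    _ ≤ ENNReal.ofReal (Wf a b x) * (S2 a b f x * Rt a b x + c * tl a b f x) := by
        exact mul_le_mul_right (add_le_add_right (hstep3 ▸ hstep4) _) _
    _ = S2 a b f x * (ENNReal.ofReal (Wf a b x) * Rt a b x)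
        + c * (ENNReal.ofReal (Wf a b x) * tl a b f x) := by ring
    _ ≤ S2 a b f x * c + c * S1 a b f x := by
        rw [← S1_apply]
        exact add_le_add_left (mul_le_mul_right hRx _) _
    _ = c * (S2 a b f x + S1 a b f x) := by ring

lemma iter_key (hB : ContinuousOn (Bfun a b) (Ici 0)) (hW : ContinuousOn (Wf a b) (Ici 0))
    (hΩ : OmegaPlus a b ≠ ⊤) {f : ℝ → ℝ≥0∞} (hf : Measurable f) (m : ℕ) :
    ∀ x ∈ Ioi (0:ℝ), (S1 a b)^[m] (S1 a b (S2 a b f)) x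
      ≤ OmegaPlus a b * ((S1 a b)^[m] (S2 a b f) x + (S1 a b)^[m] (S1 a b f) x) := by
  induction m with
  | zero =>
    simp only [Function.iterate_zero_apply]
    exact fun x hx => key hB hW hf hx
  | succ m ih =>
    intro x hx
    have hx0 : (0:ℝ) < x := hx
    set c := OmegaPlus a b with hc
    rw [Function.iterate_succ_apply', Function.iterate_succ_apply',
      Function.iterate_succ_apply']
    set p := (S1 a b)^[m] (S2 a b f) with hp
    set q := (S1 a b)^[m] (S1 a b f) with hq
    set G := (S1 a b)^[m] (S1 a b (S2 a b f)) with hG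
    rw [S1_apply, S1_apply, S1_apply]
    have hqe : q = S1 a b ((S1 a b)^[m] f) := by
      rw [hq, ← Function.iterate_succ_apply, Function.iterate_succ_apply']
    have h1 : tl a b G x ≤ c * (tl a b p x + tl a b q x) := by
      have hmono : tl a b G x
          ≤ ∫⁻ z in Ioi x, (c * (p z * Ef a b z) + c * (q z * Ef a b z)) := by
        refine lintegral_mono_ae ((ae_restrict_iff' measurableSet_Ioi).2 (ae_of_all _
          fun z hz => ?_))
        calc G z * Ef a b z ≤ (c * (p z + q z)) * Ef a b z :=
              mul_le_mul_left (ih z (hx0.trans hz)) _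
          _ = c * (p z * Ef a b z) + c * (q z * Ef a b z) := by ring
      refine le_trans hmono (le_of_eq ?_)
      have hqm : AEMeasurable (fun z => c * (q z * Ef a b z)) (volume.restrict (Ioi x)) := by
        rw [hqe]
        exact (aemeas_S1_mul hB hW _ measurableSet_Ioi (Ioi_subset_Ioi hx0.le)).const_mul c
      rw [lintegral_add_right' _ hqm, lintegral_const_mul' c _ hΩ,
        lintegral_const_mul' c _ hΩ, ← mul_add]
      rfl
    calc ENNReal.ofReal (Wf a b x) * tl a b G x
        ≤ ENNReal.ofReal (Wf a b x) * (c * (tl a b p x + tl a b q x)) :=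
          mul_le_mul_right h1 _
      _ = c * (ENNReal.ofReal (Wf a b x) * tl a b p x
          + ENNReal.ofReal (Wf a b x) * tl a b q x) := by ring

end Stmt17Aux

open Stmt17Aux

theorem stmt17 (a b : ℝ → ℝ)
    (ha : ContDiffOn ℝ 1 a (Ici 0)) (hapos : ∀ x ∈ Ici (0:ℝ), 0 < a x)
    (hb : ContinuousOn b (Ici 0))
    (hinf : ∫⁻ x in Ioi (0:ℝ),
        ENNReal.ofReal ((a x)⁻¹ * Real.exp (-2 * Bfun a b x)) = ⊤)
    (hfin : ∫⁻ x in Ioi (0:ℝ), ENNReal.ofReal (Real.exp (2 * Bfun a b x)) < ⊤)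
    (hΩ : OmegaPlus a b < ⊤)
    (f : ℝ → ℝ≥0∞) (hf : Measurable f) (hfnorm : wNorm a b f < ⊤)
    (n : ℕ) (hn : 1 ≤ n) :
    wNorm a b ((S1 a b)^[n] (S2 a b f)) ≤
      OmegaPlus a b *
        (wNorm a b ((S1 a b)^[n - 1] (S2 a b f)) + wNorm a b ((S1 a b)^[n] f)) := by
  have hBc : ContinuousOn (Bfun a b) (Ici 0) := contB ha.continuousOn hapos hb
  have hWc : ContinuousOn (Wf a b) (Ici 0) := contW ha.continuousOn hapos hBc
  obtain ⟨m, rfl⟩ : ∃ m, n = m + 1 := ⟨n - 1, (Nat.succ_pred_eq_of_pos hn).symm⟩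
  simp only [Nat.add_sub_cancel]
  set c := OmegaPlus a b with hc
  have hkey := iter_key hBc hWc hΩ.ne hf m
  set p := (S1 a b)^[m] (S2 a b f) with hp
  set q := (S1 a b)^[m] (S1 a b f) with hq
  have hqe : q = S1 a b ((S1 a b)^[m] f) := by
    rw [hq, ← Function.iterate_succ_apply, Function.iterate_succ_apply']
  have he : (S1 a b)^[m+1] (S2 a b f) = (S1 a b)^[m] (S1 a b (S2 a b f)) :=
    Function.iterate_succ_apply _ _ _
  have he2 : (S1 a b)^[m+1] f = q := by
    rw [hq]
    exact Function.iterate_succ_apply _ _ _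
  rw [he, he2, wNorm_eq]
  have hmono : ∫⁻ x in Ioi (0:ℝ), (S1 a b)^[m] (S1 a b (S2 a b f)) x * Ef a b x
      ≤ ∫⁻ x in Ioi (0:ℝ), (c * (p x * Ef a b x) + c * (q x * Ef a b x)) := by
    refine lintegral_mono_ae ((ae_restrict_iff' measurableSet_Ioi).2 (ae_of_all _
      fun z hz => ?_))
    calc (S1 a b)^[m] (S1 a b (S2 a b f)) z * Ef a b z
        ≤ (c * (p z + q z)) * Ef a b z := mul_le_mul_left (hkey z hz) _
      _ = c * (p z * Ef a b z) + c * (q z * Ef a b z) := by ring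
  refine le_trans hmono (le_of_eq ?_)
  have hqm : AEMeasurable (fun z => c * (q z * Ef a b z)) (volume.restrict (Ioi (0:ℝ))) := by
    rw [hqe]
    exact (aemeas_S1_mul hBc hWc _ measurableSet_Ioi (fun _ h => h)).const_mul c
  rw [lintegral_add_right' _ hqm, lintegral_const_mul' c _ hΩ.ne,
    lintegral_const_mul' c _ hΩ.ne, ← mul_add]
  rfl
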